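/- arXiv:2003.08842 — 5 statements merged into one kernel-verified Lean document; each statement's English description precedes it below -/
import Mathlib

section
/- Let 1 ≤ k ≤ n and let f : [k−1] → [n] be a monomorphism in the simplex category Δ (equivalently, an injective order-preserving map). Then the number of sequences I ∈ D(k,n) with d_I = f is exactly (n−k+1)!. (This is the count of the (n−k+1)! ways of decomposing a composite face map, i.e., the vertex count of the corresponding face-map polyhedron.) -/
open CategoryTheory

/-- The composite coface map `δ_{i_{m+1+ℓ}} ∘ ⋯ ∘ δ_{i_{m+1}} : [m] ⟶ [m+1+ℓ]` in the
simplex category, built from a family of indices `I j : Fin (j+1)`. -/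
def dComp (I : ∀ j : ℕ, Fin (j + 1)) (m : ℕ) :
    ∀ ℓ : ℕ, (SimplexCategory.mk m ⟶ SimplexCategory.mk (m + 1 + ℓ))
  | 0 => SimplexCategory.δ (I (m + 1))
  | (ℓ + 1) => dComp I m ℓ ≫ SimplexCategory.δ (I (m + 1 + ℓ + 1))

/-- An element of `D(k,n)`: a sequence `(i_k, i_{k+1}, …, i_n)` with `0 ≤ i_j ≤ j`.
The index `t : Fin (n - k + 1)` corresponds to `j = k + t`, and the entry `i_j` is an
element of `Fin (j + 1)`, i.e. `0 ≤ i_j ≤ j`. -/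
abbrev DSeq (k n : ℕ) := ∀ t : Fin (n - k + 1), Fin (k + t + 1)

/-- Extend an element of `D(k,n)` to a globally defined family of indices (with junk
value `0` outside the window `k ≤ j ≤ n`). -/
def DSeq.pad {k n : ℕ} (I : DSeq k n) (j : ℕ) : Fin (j + 1) :=
  if h : k ≤ j ∧ j ≤ n then
    have h1 : j - k < n - k + 1 := by omega
    Fin.cast (by simp only [Fin.val_mk]; omega) (I ⟨j - k, h1⟩)
  else 0

/-- The composite coface map `d_I = δ_{i_n} ∘ ⋯ ∘ δ_{i_k} : [k-1] ⟶ [n]` associated to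
`I ∈ D(k,n)`, for `1 ≤ k ≤ n`. -/
def dOf (k n : ℕ) (hk : 1 ≤ k) (hkn : k ≤ n) (I : DSeq k n) :
    (SimplexCategory.mk (k - 1) ⟶ SimplexCategory.mk n) :=
  dComp I.pad (k - 1) (n - k) ≫
    eqToHom (congrArg SimplexCategory.mk (by omega : k - 1 + 1 + (n - k) = n))

section Aux

open SimplexCategory

/-- Window version of `DSeq`: sequences indexed relative to the source dimension. -/
def DWin (m ℓ : ℕ) := ∀ t : Fin (ℓ + 1), Fin (m + 1 + t + 1)

/-- The composite coface map associated to a window sequence. -/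
def dWin (m : ℕ) : ∀ ℓ : ℕ, DWin m ℓ → (SimplexCategory.mk m ⟶ SimplexCategory.mk (m + 1 + ℓ))
  | 0, I => SimplexCategory.δ (I 0)
  | (ℓ + 1), I => dWin m ℓ (fun t => I t.castSucc) ≫ SimplexCategory.δ (I (Fin.last (ℓ + 1)))

lemma δ_inj {m : ℕ} {i j : Fin (m + 2)} (h : SimplexCategory.δ i = SimplexCategory.δ j) :
    i = j := by
  apply Fin.succAbove_left_injective (n := m + 1)
  funext x
  exact congrArg (fun g : SimplexCategory.mk m ⟶ SimplexCategory.mk (m+1) => g.toOrderHom x) h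

instance finDWin (m ℓ : ℕ) : Fintype (DWin m ℓ) := by unfold DWin; infer_instance

theorem cardDWin (m : ℕ) : ∀ ℓ : ℕ, ∀ f : SimplexCategory.mk m ⟶ SimplexCategory.mk (m + 1 + ℓ),
    Mono f → Nat.card {I : DWin m ℓ // dWin m ℓ I = f} = Nat.factorial (ℓ + 1) := by
  intro ℓ
  induction ℓ with
  | zero =>
    intro f hf
    haveI := hf
    obtain ⟨a, ha⟩ := SimplexCategory.eq_δ_of_mono f
    have e : {I : DWin m 0 // dWin m 0 I = f} ≃ {x : Fin (m + 2) // SimplexCategory.δ x = f} :=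
      Equiv.subtypeEquiv (Equiv.piUnique (fun t : Fin 1 => Fin (m + 1 + t + 1)))
        (fun I => Iff.rfl)
    rw [Nat.card_congr e]
    show _ = 1
    rw [Nat.card_eq_one_iff_unique]
    constructor
    · constructor
      intro x y
      apply Subtype.ext
      exact δ_inj (x.2.trans y.2.symm)
    · exact ⟨⟨a, ha.symm⟩⟩
  | succ ℓ IH =>
    intro f hf
    classical
    -- split off the last coface
    let esplit : DWin m (ℓ + 1) ≃ (DWin m ℓ) × Fin (m + 1 + ℓ + 2) :=
      { toFun := fun I => (fun t => I t.castSucc, I (Fin.last (ℓ + 1)))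
        invFun := fun p => Fin.lastCases (motive := fun t => Fin (m + 1 + t + 1)) p.2 p.1
        left_inv := fun I => by
          funext t
          refine Fin.lastCases ?_ (fun i => ?_) t
          · simp
          · simp
        right_inv := fun p => by
          refine Prod.ext ?_ ?_
          · funext t
            exact Fin.lastCases_castSucc (motive := fun t => Fin (m + 1 + t + 1)) t
          · exact Fin.lastCases_last (motive := fun t => Fin (m + 1 + t + 1)) }
    have e1 : {I : DWin m (ℓ + 1) // dWin m (ℓ + 1) I = f} ≃
        {p : (DWin m ℓ) × Fin (m + 1 + ℓ + 2) //
          dWin m ℓ p.1 ≫ SimplexCategory.δ p.2 = f} :=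
      Equiv.subtypeEquiv esplit (fun I => Iff.rfl)
    have e2 : {p : (DWin m ℓ) × Fin (m + 1 + ℓ + 2) //
          dWin m ℓ p.1 ≫ SimplexCategory.δ p.2 = f} ≃
        Σ a : Fin (m + 1 + ℓ + 2), {J : DWin m ℓ // dWin m ℓ J ≫ SimplexCategory.δ a = f} :=
      { toFun := fun p => ⟨p.1.2, p.1.1, p.2⟩
        invFun := fun q => ⟨(q.2.1, q.1), q.2.2⟩
        left_inv := fun p => rfl
        right_inv := fun q => rfl }
    rw [Nat.card_congr (e1.trans e2)]
    have key : ∀ a : Fin (m + 1 + ℓ + 2),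
        Nat.card {J : DWin m ℓ // dWin m ℓ J ≫ SimplexCategory.δ a = f} =
          if a ∈ Set.range f.toOrderHom then 0 else Nat.factorial (ℓ + 1) := by
      intro a
      by_cases hmem : a ∈ Set.range f.toOrderHom
      · rw [if_pos hmem]
        rw [Nat.card_eq_zero]
        left
        constructor
        rintro ⟨J, hJ⟩
        obtain ⟨x, hx⟩ := hmem
        rw [← hJ] at hx
        rw [SimplexCategory.comp_toOrderHom] at hx
        exact Fin.succAbove_ne a ((dWin m ℓ J).toOrderHom x) hx
      · rw [if_neg hmem]
        obtain ⟨g, hg⟩ := SimplexCategory.eq_comp_δ_of_not_surjective' f a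
          (fun x hx => hmem ⟨x, hx⟩)
        haveI : Mono (g ≫ SimplexCategory.δ a) := hg ▸ hf
        haveI hgm : Mono g := CategoryTheory.mono_of_mono g (SimplexCategory.δ a)
        have hpred : ∀ J : DWin m ℓ,
            (dWin m ℓ J ≫ SimplexCategory.δ a = f ↔ dWin m ℓ J = g) := by
          intro J
          rw [hg, cancel_mono]
        rw [Nat.card_congr (Equiv.subtypeEquivRight hpred)]
        exact IH g hgm
    rw [Nat.card_eq_fintype_card, Fintype.card_sigma]
    have : ∀ a : Fin (m + 1 + ℓ + 2),
        Fintype.card {J : DWin m ℓ // dWin m ℓ J ≫ SimplexCategory.δ a = f} =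
          if a ∈ Set.range f.toOrderHom then 0 else Nat.factorial (ℓ + 1) := by
      intro a; rw [← Nat.card_eq_fintype_card]; exact key a
    rw [Finset.sum_congr rfl (fun a _ => this a), Finset.sum_ite, Finset.sum_const,
      Finset.sum_const, smul_eq_mul, smul_eq_mul, mul_zero, zero_add]
    have hinj : Function.Injective f.toOrderHom := SimplexCategory.mono_iff_injective.mp hf
    have himg : (Finset.univ.filter (fun a : Fin (m + 1 + ℓ + 2) =>
        a ∈ Set.range f.toOrderHom)).card = m + 1 := by
      have : (Finset.univ.filter (fun a : Fin (m + 1 + ℓ + 2) =>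
          a ∈ Set.range f.toOrderHom)) = Finset.univ.image f.toOrderHom := by
        ext a
        simp [Set.mem_range]
      rw [this, Finset.card_image_of_injective _ hinj, Finset.card_univ]
      simp
    have hsplit := Finset.card_filter_add_card_filter_not
      (s := (Finset.univ : Finset (Fin (m + 1 + ℓ + 2))))
      (p := fun a => a ∈ Set.range f.toOrderHom)
    rw [Finset.card_univ, Fintype.card_fin] at hsplit
    have hcard : (Finset.univ.filter (fun a : Fin (m + 1 + ℓ + 2) =>
        ¬ a ∈ Set.range f.toOrderHom)).card = ℓ + 2 := by omega
    rw [hcard]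
    rw [show ℓ + 1 + 1 = ℓ + 2 by rfl, Nat.factorial_succ (ℓ + 1)]

lemma dComp_eq_dWin (I : ∀ j : ℕ, Fin (j + 1)) (m : ℕ) :
    ∀ ℓ : ℕ, dComp I m ℓ = dWin m ℓ (fun t => I (m + 1 + t))
  | 0 => rfl
  | (ℓ + 1) => by
    show dComp I m ℓ ≫ _ = dWin m ℓ _ ≫ _
    rw [dComp_eq_dWin I m ℓ]
    rfl

end Aux

/-- For `1 ≤ k ≤ n` and a monomorphism `f : [k-1] ⟶ [n]` in the simplex category,
the number of sequences `I ∈ D(k,n)` with `d_I = f` is exactly `(n - k + 1)!`. -/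
theorem card_fiber_dOf (k n : ℕ) (hk : 1 ≤ k) (hkn : k ≤ n)
    (f : SimplexCategory.mk (k - 1) ⟶ SimplexCategory.mk n) (hf : Mono f) :
    Nat.card {I : DSeq k n // dOf k n hk hkn I = f} = Nat.factorial (n - k + 1) := by
  classical
  haveI := hf
  have hml : k - 1 + 1 + (n - k) = n := by omega
  set f' : SimplexCategory.mk (k - 1) ⟶ SimplexCategory.mk (k - 1 + 1 + (n - k)) :=
    f ≫ eqToHom (congrArg SimplexCategory.mk hml.symm) with hf'
  haveI hmf' : Mono f' := by rw [hf']; infer_instance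
  have hcast : ∀ t : Fin (n - k + 1), k + t + 1 = k - 1 + 1 + t + 1 := fun t => by omega
  let e : DSeq k n ≃ DWin (k - 1) (n - k) :=
    { toFun := fun I t => Fin.cast (hcast t) (I t)
      invFun := fun J t => Fin.cast (hcast t).symm (J t)
      left_inv := fun I => by funext t; apply Fin.ext; simp
      right_inv := fun J => by funext t; apply Fin.ext; simp }
  have hiff : ∀ I : DSeq k n, dOf k n hk hkn I = f ↔ dWin (k - 1) (n - k) (e I) = f' := by
    intro I
    have hpad : (fun t : Fin (n - k + 1) => I.pad (k - 1 + 1 + (t : ℕ))) = e I := by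
      funext t
      have h1 : k ≤ k - 1 + 1 + (t : ℕ) ∧ k - 1 + 1 + (t : ℕ) ≤ n := ⟨by omega, by omega⟩
      rw [DSeq.pad, dif_pos h1]
      have ht : (⟨k - 1 + 1 + (t : ℕ) - k, by omega⟩ : Fin (n - k + 1)) = t := by
        apply Fin.ext
        show k - 1 + 1 + (t : ℕ) - k = (t : ℕ)
        omega
      apply Fin.ext
      show ((I ⟨k - 1 + 1 + (t : ℕ) - k, by omega⟩ : Fin _) : ℕ) = ((I t : Fin _) : ℕ)
      exact congrArg (fun s => ((I s : Fin _) : ℕ)) ht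
    simp only [dOf]
    rw [comp_eqToHom_iff, dComp_eq_dWin, hpad]
  rw [Nat.card_congr (Equiv.subtypeEquiv (q := fun J => dWin (k - 1) (n - k) J = f') e hiff)]
  exact cardDWin (k - 1) (n - k) f' hmf'
end

section
/- For real numbers 0 < a_0 < a_1 < ⋯ < a_n, the set of extreme points of the permutohedron P(a) is exactly the set V(a) of permuted points, and V(a) has exactly (n+1)! elements; in particular P(a) has (n+1)! vertices. -/
/-- The vertex set `V(a)` of the permutohedron: all points
`(a_{σ(0)}, …, a_{σ(n)}) ∈ ℝ^{n+1}` for permutations `σ` of `{0, …, n}`. -/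
def permVertices (n : ℕ) (a : Fin (n + 1) → ℝ) : Set (EuclideanSpace ℝ (Fin (n + 1))) :=
  {x | ∃ σ : Equiv.Perm (Fin (n + 1)), ∀ i, x i = a (σ i)}

lemma permVertices_eq_range (n : ℕ) (a : Fin (n + 1) → ℝ) :
    permVertices n a = Set.range (fun σ : Equiv.Perm (Fin (n + 1)) =>
      (WithLp.toLp 2 (fun i => a (σ i)) : EuclideanSpace ℝ (Fin (n + 1)))) := by
  ext x
  constructor
  · rintro ⟨σ, hσ⟩; exact ⟨σ, by ext i; exact (hσ i).symm⟩
  · rintro ⟨σ, rfl⟩; exact ⟨σ, fun i => rfl⟩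

lemma norm_permVertex (n : ℕ) (a : Fin (n + 1) → ℝ) (x : EuclideanSpace ℝ (Fin (n + 1)))
    (hx : x ∈ permVertices n a) :
    ‖x‖ = Real.sqrt (∑ i, a i ^ 2) := by
  obtain ⟨σ, hσ⟩ := hx
  rw [EuclideanSpace.norm_eq]
  congr 1
  rw [← Equiv.sum_comp σ (fun i => a i ^ 2)]
  refine Finset.sum_congr rfl fun i _ => ?_
  rw [hσ i, Real.norm_eq_abs, sq_abs]

/-- For real numbers `0 < a_0 < a_1 < ⋯ < a_n`, the set of extreme points of the
permutohedron `P(a) = convexHull (V(a))` is exactly `V(a)`, and `V(a)` has exactly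
`(n+1)!` elements; in particular `P(a)` has `(n+1)!` vertices. -/
theorem extremePoints_permutohedron (n : ℕ) (a : Fin (n + 1) → ℝ)
    (h0 : 0 < a 0) (ha : StrictMono a) :
    Set.extremePoints ℝ (convexHull ℝ (permVertices n a)) = permVertices n a ∧
      Nat.card ↥(permVertices n a) = Nat.factorial (n + 1) := by
  set r : ℝ := Real.sqrt (∑ i, a i ^ 2) with hr
  have hball : convexHull ℝ (permVertices n a) ⊆ Metric.closedBall (0 : EuclideanSpace ℝ (Fin (n + 1))) r := by
    apply convexHull_min _ (convex_closedBall _ _)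
    intro x hx
    simp only [Metric.mem_closedBall, dist_zero_right]
    exact le_of_eq (norm_permVertex n a x hx)
  constructor
  · apply Set.Subset.antisymm
    · exact extremePoints_convexHull_subset
    · intro v hv
      rw [mem_extremePoints]
      refine ⟨subset_convexHull ℝ _ hv, ?_⟩
      intro y hy z hz hseg
      have hynorm : ‖y‖ ≤ r := by simpa using hball hy
      have hznorm : ‖z‖ ≤ r := by simpa using hball hz
      obtain ⟨p, q, hp, hq, hpq, hv'⟩ := hseg
      have hyz : y = z := by
        by_contra hne
        have := norm_combo_lt_of_ne hynorm hznorm hne hp hq hpq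
        rw [hv', norm_permVertex n a v hv] at this
        exact lt_irrefl _ this
      subst hyz
      have : y = v := by
        rw [← hv', ← add_smul, hpq, one_smul]
      exact ⟨this, this⟩
  · rw [permVertices_eq_range]
    have hinj : Function.Injective (fun σ : Equiv.Perm (Fin (n + 1)) =>
        (WithLp.toLp 2 (fun i => a (σ i)) : EuclideanSpace ℝ (Fin (n + 1)))) := by
      exact fun σ τ h => Equiv.ext fun i => ha.injective (congrArg (fun x => x i) h)
    rw [Nat.card_range_of_injective hinj, Nat.card_eq_fintype_card, Fintype.card_perm,
      Fintype.card_fin]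
end

section
/- Let I, J be disjoint finite sets of nonnegative integers and let r be a nonnegative integer such that either r ∈ I and r+1 ∈ J, or r+1 ∈ I and r ∈ J. Let I′ and J′ be obtained from I and J by exchanging the two elements r and r+1 between the two sets (leaving all other elements unchanged). Then sgn(I′, J′) = −sgn(I, J). -/
/-- The sign `sgn(I,J)` of a pair of finite sets of nonnegative integers:
`sgn(I,J) = (-1)^m` where `m` is the number of pairs `(i,j) ∈ (I∖J) × (J∖I)` with
`i > j`.  For disjoint `I` and `J` this is the sign of the permutation of
`|I| + |J|` letters rearranging the concatenation of the increasing enumerations of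
`I` and `J` into the increasing enumeration of `I ∪ J`, and in general
`sgn(I,J) = sgn(I∖J, J∖I)`. -/
def sgnSet (I J : Finset ℕ) : ℤ :=
  (-1) ^ (((I \ J) ×ˢ (J \ I)).filter fun p => p.2 < p.1).card

lemma card_filter_product' (I J : Finset ℕ) :
    ((I ×ˢ J).filter fun p => p.2 < p.1).card
      = ∑ i ∈ I, (J.filter (· < i)).card := by
  rw [Finset.card_filter, Finset.sum_product]
  exact Finset.sum_congr rfl fun i _ => (Finset.card_filter _ _).symm

lemma key_count (I₀ J₀ : Finset ℕ) (r : ℕ) (h1 : r ∉ I₀) (h2 : r + 1 ∉ I₀)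
    (h3 : r ∉ J₀) (h4 : r + 1 ∉ J₀) :
    (((insert (r + 1) I₀) ×ˢ (insert r J₀)).filter fun p => p.2 < p.1).card
      = (((insert r I₀) ×ˢ (insert (r + 1) J₀)).filter fun p => p.2 < p.1).card + 1 := by
  rw [card_filter_product', card_filter_product',
      Finset.sum_insert h2, Finset.sum_insert h1]
  have efilt : J₀.filter (· < r + 1) = J₀.filter (· < r) := by
    apply Finset.filter_congr
    intro j hj
    have : j ≠ r := fun h => h3 (h ▸ hj)
    omega
  have e1 : ((insert r J₀).filter (· < r + 1)).card = (J₀.filter (· < r)).card + 1 := by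
    rw [Finset.filter_insert, if_pos (Nat.lt_succ_self r),
        Finset.card_insert_of_notMem (fun hm => h3 (Finset.mem_filter.mp hm).1), efilt]
  have e2 : ((insert (r + 1) J₀).filter (· < r)).card = (J₀.filter (· < r)).card := by
    rw [Finset.filter_insert, if_neg (by omega)]
  have e3 : ∑ i ∈ I₀, ((insert r J₀).filter (· < i)).card
      = ∑ i ∈ I₀, ((insert (r + 1) J₀).filter (· < i)).card := by
    apply Finset.sum_congr rfl
    intro i hi
    have hir : i ≠ r + 1 := fun h => h2 (h ▸ hi)
    rw [Finset.filter_insert, Finset.filter_insert]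
    by_cases hc : r < i
    · rw [if_pos hc, if_pos (by omega),
        Finset.card_insert_of_notMem (fun hm => h3 (Finset.mem_filter.mp hm).1),
        Finset.card_insert_of_notMem (fun hm => h4 (Finset.mem_filter.mp hm).1)]
    · rw [if_neg hc, if_neg (by omega)]
  rw [e1, e2, e3]
  ring

/-- Let `I, J` be disjoint finite sets of nonnegative integers and `r` a nonnegative
integer such that either `r ∈ I` and `r+1 ∈ J`, or `r+1 ∈ I` and `r ∈ J`.  If `I′, J′`
are obtained from `I, J` by exchanging the two elements `r` and `r+1` between the two
sets (leaving all other elements unchanged), then `sgn(I′,J′) = -sgn(I,J)`. -/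
theorem sgnSet_swap_adjacent (I J I' J' : Finset ℕ) (hd : Disjoint I J) (r : ℕ)
    (h : (r ∈ I ∧ r + 1 ∈ J ∧ I' = insert (r + 1) (I.erase r) ∧
            J' = insert r (J.erase (r + 1))) ∨
         (r + 1 ∈ I ∧ r ∈ J ∧ I' = insert r (I.erase (r + 1)) ∧
            J' = insert (r + 1) (J.erase r))) :
    sgnSet I' J' = -sgnSet I J := by
  have hdl := Finset.disjoint_left.mp hd
  rcases h with ⟨hrI, hr1J, hI', hJ'⟩ | ⟨hr1I, hrJ, hI', hJ'⟩
  · set I₀ := I.erase r with hI₀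
    set J₀ := J.erase (r + 1) with hJ₀
    have h1 : r ∉ I₀ := Finset.notMem_erase _ _
    have h2 : r + 1 ∉ I₀ := fun hm => hdl (Finset.mem_of_mem_erase hm) hr1J
    have h3 : r ∉ J₀ := fun hm => hdl hrI (Finset.mem_of_mem_erase hm)
    have h4 : r + 1 ∉ J₀ := Finset.notMem_erase _ _
    have hI : I = insert r I₀ := (Finset.insert_erase hrI).symm
    have hJ : J = insert (r + 1) J₀ := (Finset.insert_erase hr1J).symm
    have hd' : Disjoint I' J' := by
      rw [hI', hJ']
      simp only [Finset.disjoint_left, Finset.mem_insert]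
      rintro x (rfl | hx) hx'
      · rcases hx' with h | hx'
        · omega
        · exact h4 hx'
      · rcases hx' with rfl | hx'
        · exact h1 hx
        · exact hdl (Finset.mem_of_mem_erase hx) (Finset.mem_of_mem_erase hx')
    unfold sgnSet
    rw [Finset.sdiff_eq_self_of_disjoint hd, Finset.sdiff_eq_self_of_disjoint hd.symm,
        Finset.sdiff_eq_self_of_disjoint hd', Finset.sdiff_eq_self_of_disjoint hd'.symm,
        hI', hJ', hI, hJ, key_count I₀ J₀ r h1 h2 h3 h4, pow_succ]
    ring
  · set I₀ := I.erase (r + 1) with hI₀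
    set J₀ := J.erase r with hJ₀
    have h1 : r ∉ I₀ := fun hm => hdl (Finset.mem_of_mem_erase hm) hrJ
    have h2 : r + 1 ∉ I₀ := Finset.notMem_erase _ _
    have h3 : r ∉ J₀ := Finset.notMem_erase _ _
    have h4 : r + 1 ∉ J₀ := fun hm => hdl hr1I (Finset.mem_of_mem_erase hm)
    have hI : I = insert (r + 1) I₀ := (Finset.insert_erase hr1I).symm
    have hJ : J = insert r J₀ := (Finset.insert_erase hrJ).symm
    have hd' : Disjoint I' J' := by
      rw [hI', hJ']
      simp only [Finset.disjoint_left, Finset.mem_insert]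
      rintro x (rfl | hx) hx'
      · rcases hx' with h | hx'
        · omega
        · exact h3 hx'
      · rcases hx' with rfl | hx'
        · exact h2 hx
        · exact hdl (Finset.mem_of_mem_erase hx) (Finset.mem_of_mem_erase hx')
    unfold sgnSet
    rw [Finset.sdiff_eq_self_of_disjoint hd, Finset.sdiff_eq_self_of_disjoint hd.symm,
        Finset.sdiff_eq_self_of_disjoint hd', Finset.sdiff_eq_self_of_disjoint hd'.symm,
        hI', hJ', hI, hJ, key_count I₀ J₀ r h1 h2 h3 h4, pow_succ]
    ring
end

section
/- Let p, q, r ≥ 2 be integers, set n := p + q + r − 4, and let L, M, N be pairwise disjoint finite sets of nonnegative integers with |L| = r−2, |M| = p−2, |N| = q−2. Writing S+1 := {s+1 : s ∈ S}, one has (−1)^{nr} · sgn(L+1, {0} ∪ ((M ∪ N)+1)) = (−1)^{pr} · sgn(N,L) · sgn(L,M). -/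
/-- inversion count -/
def cnt (A B : Finset ℕ) : ℕ := ((A ×ˢ B).filter fun p => p.2 < p.1).card

lemma cnt_eq_sum (A B : Finset ℕ) : cnt A B = ∑ a ∈ A, ∑ b ∈ B, if b < a then 1 else 0 := by
  rw [cnt, Finset.card_filter, Finset.sum_product]

lemma sgnSet_of_disjoint (I J : Finset ℕ) (h : Disjoint I J) :
    sgnSet I J = (-1) ^ cnt I J := by
  rw [sgnSet, cnt, Finset.sdiff_eq_self_of_disjoint h, Finset.sdiff_eq_self_of_disjoint h.symm]

lemma cnt_add_cnt (A B : Finset ℕ) (h : Disjoint A B) :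
    cnt A B + cnt B A = A.card * B.card := by
  rw [cnt_eq_sum, cnt_eq_sum, Finset.sum_comm (s := B), ← Finset.sum_add_distrib]
  have key : ∀ a ∈ A,
      ((∑ b ∈ B, if b < a then 1 else 0) + ∑ b ∈ B, if a < b then 1 else 0) = B.card := by
    intro a ha
    rw [← Finset.sum_add_distrib]
    have : ∀ b ∈ B, ((if b < a then 1 else 0) + if a < b then (1:ℕ) else 0) = 1 := by
      intro b hb
      have hne : a ≠ b := fun e => Finset.disjoint_left.mp h ha (e ▸ hb)
      rcases lt_or_gt_of_ne hne with h1 | h1 <;> simp [h1, asymm h1]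
    rw [Finset.sum_congr rfl this, Finset.sum_const, smul_eq_mul, mul_one]
  rw [Finset.sum_congr rfl key, Finset.sum_const, smul_eq_mul]

lemma cnt_union_right (A B C : Finset ℕ) (h : Disjoint B C) :
    cnt A (B ∪ C) = cnt A B + cnt A C := by
  simp only [cnt_eq_sum, Finset.sum_union h, Finset.sum_add_distrib]

lemma cnt_key (L S : Finset ℕ) :
    cnt (L.image (· + 1)) (insert 0 (S.image (· + 1))) = L.card + cnt L S := by
  have h0 : (0 : ℕ) ∉ S.image (· + 1) := by simp
  have hinj : Set.InjOn (· + 1) L := fun a _ b _ h => by simpa using h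
  have hinj' : Set.InjOn (· + 1) S := fun a _ b _ h => by simpa using h
  rw [cnt_eq_sum, Finset.sum_image hinj]
  have : ∀ l ∈ L, (∑ b ∈ insert 0 (S.image (· + 1)), if b < l + 1 then 1 else 0)
      = 1 + ∑ s ∈ S, if s < l then 1 else 0 := by
    intro l hl
    rw [Finset.sum_insert h0, Finset.sum_image hinj']
    simp
  rw [Finset.sum_congr rfl this, Finset.sum_add_distrib, cnt_eq_sum]
  simp

lemma neg_one_pow_eq_of_even_add {a b : ℕ} (h : Even (a + b)) : (-1 : ℤ) ^ a = (-1) ^ b := by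
  rcases Nat.even_or_odd a with h1 | h1
  · rw [h1.neg_one_pow, ((Nat.even_add.mp h).mp h1).neg_one_pow]
  · have h2 : Odd b := by
      rw [← Nat.not_even_iff_odd] at h1 ⊢
      rw [Nat.even_add] at h
      tauto
    rw [h1.neg_one_pow, h2.neg_one_pow]

/-- Let `p, q, r ≥ 2`, set `n := p + q + r - 4`, and let `L, M, N` be pairwise disjoint
finite sets of nonnegative integers with `|L| = r-2`, `|M| = p-2`, `|N| = q-2`.
Writing `S + 1` for the shift `{s + 1 : s ∈ S}`, one has
`(-1)^{nr} ⬝ sgn(L+1, {0} ∪ ((M ∪ N)+1)) = (-1)^{pr} ⬝ sgn(N,L) ⬝ sgn(L,M)`. -/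
theorem sgnSet_hat_identity (p q r n : ℕ) (hp : 2 ≤ p) (hq : 2 ≤ q) (hr : 2 ≤ r)
    (hn : n = p + q + r - 4) (L M N : Finset ℕ)
    (hLM : Disjoint L M) (hLN : Disjoint L N) (hMN : Disjoint M N)
    (hL : L.card = r - 2) (hM : M.card = p - 2) (hN : N.card = q - 2) :
    (-1 : ℤ) ^ (n * r) *
        sgnSet (L.image (· + 1)) (insert 0 ((M ∪ N).image (· + 1))) =
      (-1 : ℤ) ^ (p * r) * sgnSet N L * sgnSet L M := by
  obtain ⟨p', rfl⟩ := Nat.exists_eq_add_of_le hp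
  obtain ⟨q', rfl⟩ := Nat.exists_eq_add_of_le hq
  obtain ⟨r', rfl⟩ := Nat.exists_eq_add_of_le hr
  have hn' : n = p' + q' + r' + 2 := by omega
  subst hn'
  have hL' : L.card = r' := by omega
  have hM' : M.card = p' := by omega
  have hN' : N.card = q' := by omega
  have hd1 : Disjoint (L.image (· + 1)) (insert 0 ((M ∪ N).image (· + 1))) := by
    rw [Finset.disjoint_insert_right, Finset.disjoint_image (add_left_injective 1)]
    exact ⟨by simp, by rw [Finset.disjoint_union_right]; exact ⟨hLM, hLN⟩⟩
  rw [sgnSet_of_disjoint _ _ hd1, sgnSet_of_disjoint _ _ hLN.symm, sgnSet_of_disjoint _ _ hLM,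
    cnt_key, cnt_union_right _ _ _ hMN, hL']
  set a := cnt L M with ha
  set b := cnt L N with hb
  set c := cnt N L with hc
  have hbc : b + c = r' * q' := by
    have := cnt_add_cnt L N hLN
    rw [hL', hN'] at this
    omega
  rw [← pow_add, ← pow_add, ← pow_add]
  apply neg_one_pow_eq_of_even_add
  obtain ⟨k, hk⟩ := Nat.even_mul_succ_self r'
  refine ⟨p' * r' + 2 * p' + q' + 3 * r' + 4 + a + q' * r' + k, ?_⟩
  have h2 : (p' + q' + r' + 2) * (2 + r') + (r' + (a + b)) + ((2 + p') * (2 + r') + c + a)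
      = 2 * (p' * r' + 2 * p' + q' + 3 * r' + 4 + a) + q' * r' + (b + c) + r' * (r' + 1) := by
    ring
  rw [h2, hbc, hk]
  ring
end

section
/- Let k ≥ 1 and let C = [0,1]^k ⊆ ℝ^k be the unit cube, with ∂₊C = {x ∈ C : x_i = 1 for some i} and ∂₋C = {x ∈ C : x_i = 0 for some i}. Then there is a homeomorphism from ∂₊C (with the subspace topology) onto the closed unit ball of Euclidean (k−1)-space that carries ∂₊C ∩ ∂₋C onto the unit sphere S^{k−2}. In particular, collapsing ∂₊C ∩ ∂₋C inside ∂₊C yields a (k−1)-sphere. -/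
/-- The unit cube `C = [0,1]^k ⊆ ℝ^k`. -/
def unitCube (k : ℕ) : Set (EuclideanSpace ℝ (Fin k)) :=
  {x | ∀ i, x i ∈ Set.Icc (0 : ℝ) 1}

/-- The union `∂₊C` of the top faces of the unit cube: points of `C` with some
coordinate equal to `1`. -/
def cubeTop (k : ℕ) : Set (EuclideanSpace ℝ (Fin k)) :=
  {x ∈ unitCube k | ∃ i, x i = 1}

/-- The union `∂₋C` of the bottom faces of the unit cube: points of `C` with some
coordinate equal to `0`. -/
def cubeBot (k : ℕ) : Set (EuclideanSpace ℝ (Fin k)) :=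
  {x ∈ unitCube k | ∃ i, x i = 0}

open Set Metric Bornology

section Aux
variable {n : ℕ}


/-- auxiliary: projected simplex -/
def simT (n : ℕ) : Set (EuclideanSpace ℝ (Fin n)) :=
  {u | (∀ i, 0 ≤ u i) ∧ ∑ i, u i ≤ 1}

lemma simT_convex : Convex ℝ (simT n) := by
  intro u hu v hv a b ha hb hab
  refine ⟨fun i => ?_, ?_⟩
  · have : (a • u + b • v) i = a * u i + b * v i := rfl
    rw [this]
    have := hu.1 i; have := hv.1 i
    positivity
  · have : ∑ i, (a • u + b • v) i = a * ∑ i, u i + b * ∑ i, v i := by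
      simp only [Finset.mul_sum, ← Finset.sum_add_distrib]; rfl
    rw [this]
    nlinarith [hu.2, hv.2]

lemma simT_isClosed : IsClosed (simT n) := by
  have h1 : IsClosed {u : EuclideanSpace ℝ (Fin n) | ∀ i, 0 ≤ u i} := by
    rw [Set.setOf_forall]
    exact isClosed_iInter fun i =>
      isClosed_le continuous_const (EuclideanSpace.proj i).continuous
  have h2 : IsClosed {u : EuclideanSpace ℝ (Fin n) | ∑ i, u i ≤ 1} :=
    isClosed_le (continuous_finset_sum _ fun i _ => (EuclideanSpace.proj i).continuous)
      continuous_const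
  exact h1.inter h2

lemma simT_isBounded : IsBounded (simT n) := by
  rw [isBounded_iff_forall_norm_le]
  refine ⟨Real.sqrt n, fun u hu => ?_⟩
  have hle : ∀ i, u i ≤ 1 := fun i => by
    calc u i ≤ ∑ j, u j := Finset.single_le_sum (fun j _ => hu.1 j) (Finset.mem_univ i)
    _ ≤ 1 := hu.2
  rw [EuclideanSpace.norm_eq]
  have hsum : ∑ i, ‖u i‖ ^ 2 ≤ (n : ℝ) := by
    have : ∀ i ∈ Finset.univ, ‖u i‖ ^ 2 ≤ 1 := fun i _ => by
      have h0 := hu.1 i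
      have h1 : ‖u i‖ ≤ 1 := by rw [Real.norm_eq_abs, abs_of_nonneg h0]; exact hle i
      nlinarith [norm_nonneg (u i)]
    calc ∑ i, ‖u i‖ ^ 2 ≤ ∑ _i : Fin n, (1 : ℝ) := Finset.sum_le_sum this
    _ = n := by simp
  exact Real.sqrt_le_sqrt hsum

lemma simT_interior_eq :
    interior (simT n) = {u : EuclideanSpace ℝ (Fin n) | (∀ i, 0 < u i) ∧ ∑ i, u i < 1} := by
  apply Set.Subset.antisymm
  · intro u hu
    have huT : u ∈ simT n := interior_subset hu
    rw [mem_interior_iff_mem_nhds, Metric.mem_nhds_iff] at hu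
    obtain ⟨ε, hε, hball⟩ := hu
    constructor
    · intro i
      have hw : u - (ε / 2) • EuclideanSpace.single i (1 : ℝ) ∈ simT n := by
        apply hball
        rw [mem_ball_iff_norm]
        simp only [sub_sub_cancel_left, norm_neg, norm_smul, EuclideanSpace.norm_single]
        simp [abs_of_pos hε]
        linarith
      have := hw.1 i
      have hcoord : (u - (ε / 2) • EuclideanSpace.single i (1 : ℝ)) i = u i - ε / 2 := by
        simp [EuclideanSpace.single_apply]
      rw [hcoord] at this
      linarith
    · rcases eq_or_lt_of_le huT.2 with heq | h
      · exfalso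
        have hune : u ≠ 0 := by
          intro h0
          rw [h0] at heq; simp at heq
        have hnorm : 0 < ‖u‖ := norm_pos_iff.mpr hune
        set c : ℝ := ε / (2 * ‖u‖) with hc
        have hcpos : 0 < c := by positivity
        have hw : u + c • u ∈ simT n := by
          apply hball
          rw [mem_ball_iff_norm]
          simp only [add_sub_cancel_left, norm_smul, Real.norm_eq_abs, abs_of_pos hcpos]
          rw [hc]; rw [div_mul_eq_mul_div]
          rw [div_lt_iff₀ (by positivity)]
          nlinarith
        have hsum : ∑ i, (u + c • u) i = (1 + c) * ∑ i, u i := by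
          rw [Finset.mul_sum]
          refine Finset.sum_congr rfl fun i _ => ?_
          have : (u + c • u) i = u i + c * u i := rfl
          rw [this]; ring
        have := hw.2
        rw [hsum, ← heq] at this
        nlinarith
      · exact h
  · apply interior_maximal
    · exact fun u hu => ⟨fun i => (hu.1 i).le, hu.2.le⟩
    · have h1 : IsOpen {u : EuclideanSpace ℝ (Fin n) | ∀ i, 0 < u i} := by
        rw [Set.setOf_forall]
        exact isOpen_iInter_of_finite fun i =>
          isOpen_lt continuous_const (EuclideanSpace.proj i).continuous
      have h2 : IsOpen {u : EuclideanSpace ℝ (Fin n) | ∑ i, u i < 1} :=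
        isOpen_lt (continuous_finset_sum _ fun i _ => (EuclideanSpace.proj i).continuous)
          continuous_const
      exact h1.inter h2

lemma simT_interior_nonempty : (interior (simT n)).Nonempty := by
  rw [simT_interior_eq]
  refine ⟨WithLp.toLp 2 (fun _ => (1 : ℝ) / (2 * (n + 1))), fun i => by show (0 : ℝ) < 1 / (2 * ((n : ℝ) + 1)); positivity, ?_⟩
  show ∑ _i : Fin n, (1 : ℝ) / (2 * (n + 1)) < 1
  have : ∑ _i : Fin n, (1 : ℝ) / (2 * (n + 1)) = n * (1 / (2 * (n + 1))) := by
    rw [Finset.sum_const, Finset.card_univ, Fintype.card_fin, nsmul_eq_mul]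
  rw [this]
  rw [mul_div_assoc', mul_one, div_lt_one (by positivity)]
  have : (n : ℝ) ≥ 0 := Nat.cast_nonneg n
  linarith

lemma simT_mem_frontier {u : EuclideanSpace ℝ (Fin n)} (hu : u ∈ simT n) :
    u ∈ frontier (simT n) ↔ (∃ i, u i = 0) ∨ ∑ i, u i = 1 := by
  rw [simT_isClosed.frontier_eq, Set.mem_diff, simT_interior_eq]
  simp only [hu, true_and, Set.mem_setOf_eq, not_and_or, not_forall, not_lt]
  constructor
  · rintro (⟨i, hi⟩ | hs)
    · exact Or.inl ⟨i, le_antisymm hi (hu.1 i)⟩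
    · exact Or.inr (le_antisymm hu.2 hs)
  · rintro (⟨i, hi⟩ | hs)
    · exact Or.inl ⟨i, hi.le⟩
    · exact Or.inr hs.ge


-- compactness
lemma cubeTop_isCompact (k : ℕ) : IsCompact (cubeTop k) := by
  have h1 : IsCompact (unitCube k) := by
    have heq : unitCube k =
        (EuclideanSpace.equiv (Fin k) ℝ) ⁻¹' (Set.univ.pi fun _ => Set.Icc (0:ℝ) 1) := by
      ext x
      simp only [unitCube, Set.mem_setOf_eq, Set.mem_preimage, Set.mem_pi, Set.mem_univ,
        forall_true_left, true_implies]
      rfl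
    rw [heq]
    exact ((EuclideanSpace.equiv (Fin k) ℝ).toHomeomorph.isCompact_preimage).mpr
      (isCompact_univ_pi fun _ => isCompact_Icc)
  have h2 : IsClosed {x : EuclideanSpace ℝ (Fin k) | ∃ i, x i = 1} := by
    rw [Set.setOf_exists]
    exact isClosed_iUnion_of_finite fun i =>
      isClosed_eq (EuclideanSpace.proj i).continuous continuous_const
  exact h1.inter_right h2

end Aux


theorem cubeTop_homeo_closedBall_aux (n : ℕ) :
    ∃ f : ↥(cubeTop (n + 1)) ≃ₜ ↥(Metric.closedBall (0 : EuclideanSpace ℝ (Fin n)) 1),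
      ∀ x : ↥(cubeTop (n + 1)),
        (x : EuclideanSpace ℝ (Fin (n + 1))) ∈ cubeBot (n + 1) ↔
          (f x : EuclideanSpace ℝ (Fin n)) ∈
            Metric.sphere (0 : EuclideanSpace ℝ (Fin n)) 1 := by
  obtain ⟨h, -, hcl, hfr⟩ :=
    exists_homeomorph_image_interior_closure_frontier_eq_unitBall
      (simT_convex (n := n)) simT_interior_nonempty simT_isBounded
  rw [simT_isClosed.closure_eq] at hcl
  set E := EuclideanSpace ℝ (Fin (n + 1)) with hE
  let S : ↥(cubeTop (n + 1)) → ℝ := fun x => ∑ j, (x : E) j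
  have hS : ∀ x, 1 ≤ S x := by
    rintro ⟨x, hx, i, hi⟩
    calc (1 : ℝ) = x i := hi.symm
    _ ≤ ∑ j, x j := Finset.single_le_sum (fun j _ => (hx j).1) (Finset.mem_univ i)
  have hS0 : ∀ x, S x ≠ 0 := fun x => by have := hS x; positivity
  let g : ↥(cubeTop (n + 1)) → EuclideanSpace ℝ (Fin n) :=
    fun x => WithLp.toLp 2 (fun i : Fin n => (x : E) i.castSucc / S x)
  have hg_apply : ∀ x i, g x i = (x : E) i.castSucc / S x := fun _ _ => rfl
  have hgsum : ∀ x, ∑ i, g x i = 1 - (x : E) (Fin.last n) / S x := by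
    intro x
    have h2 : S x = (∑ i : Fin n, (x : E) i.castSucc) + (x : E) (Fin.last n) :=
      Fin.sum_univ_castSucc _
    have h1 : ∑ i : Fin n, g x i = (∑ i : Fin n, (x : E) i.castSucc) / S x :=
      (Finset.sum_div _ _ _).symm
    rw [h1, eq_sub_iff_add_eq, ← add_div, div_eq_one_iff_eq (hS0 x)]
    exact h2.symm
  have hgmem : ∀ x, g x ∈ simT n := by
    intro x
    obtain ⟨hx, -⟩ := x.2
    have hSx := hS x
    constructor
    · intro i; exact div_nonneg (hx _).1 (by linarith)
    · rw [hgsum x]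
      have : 0 ≤ (x : E) (Fin.last n) / S x := div_nonneg (hx _).1 (by linarith)
      linarith
  have hginj : Function.Injective g := by
    intro x y hxy
    have hfull : ∀ j : Fin (n + 1), (x : E) j / S x = (y : E) j / S y := by
      have hcast : ∀ i : Fin n, (x : E) i.castSucc / S x = (y : E) i.castSucc / S y :=
        fun i => congrArg (fun v : EuclideanSpace ℝ (Fin n) => v i) hxy
      intro j
      refine Fin.lastCases ?_ hcast j
      have h3 : ∑ i, g x i = ∑ i, g y i := by rw [hxy]
      rw [hgsum x, hgsum y] at h3
      linarith
    have hcross : ∀ j, (x : E) j * S y = (y : E) j * S x := by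
      intro j
      have h4 := hfull j
      field_simp [hS0 x, hS0 y] at h4
      linarith
    obtain ⟨hxc, i, hxi⟩ := x.2
    obtain ⟨hyc, i', hyi⟩ := y.2
    have hSx := hS x; have hSy := hS y
    have h1 : S y ≤ S x := by
      have h5 := hcross i; rw [hxi, one_mul] at h5
      calc S y = (y : E) i * S x := h5
      _ ≤ 1 * S x := mul_le_mul_of_nonneg_right (hyc i).2 (by linarith)
      _ = S x := one_mul _
    have h2 : S x ≤ S y := by
      have h5 := hcross i'; rw [hyi, one_mul] at h5
      calc S x = (x : E) i' * S y := h5.symm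
      _ ≤ 1 * S y := mul_le_mul_of_nonneg_right (hxc i').2 (by linarith)
      _ = S y := one_mul _
    have hSeq : S x = S y := le_antisymm h2 h1
    apply Subtype.ext
    ext j
    have h6 := hcross j
    rw [hSeq] at h6
    exact mul_right_cancel₀ (by have := hS y; positivity) h6
  have hgsurj : ∀ u ∈ simT n, ∃ x, g x = u := by
    intro u hu
    set p : Fin (n + 1) → ℝ := Fin.snoc (fun i => u i) (1 - ∑ i, u i) with hp
    have hp0 : ∀ j, 0 ≤ p j := by
      intro j
      refine Fin.lastCases ?_ (fun i => ?_) j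
      · rw [hp]; simp only [Fin.snoc_last]; linarith [hu.2]
      · rw [hp]; simp only [Fin.snoc_castSucc]; exact hu.1 i
    have hpsum : ∑ j, p j = 1 := by
      rw [Fin.sum_univ_castSucc]
      simp [hp]
    obtain ⟨i, -, hi⟩ := Finset.exists_max_image Finset.univ p Finset.univ_nonempty
    have hMpos : 0 < p i := by
      by_contra hle
      push_neg at hle
      have hz : ∀ j, p j = 0 := fun j =>
        le_antisymm (le_trans (hi j (Finset.mem_univ j)) hle) (hp0 j)
      rw [Finset.sum_congr rfl fun j _ => hz j] at hpsum
      simp at hpsum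
    let x : E := WithLp.toLp 2 (fun j => p j / p i)
    have hxmem : x ∈ cubeTop (n + 1) := by
      refine ⟨fun j => ⟨div_nonneg (hp0 j) hMpos.le, ?_⟩, ⟨i, ?_⟩⟩
      · rw [div_le_one hMpos]; exact hi j (Finset.mem_univ j)
      · exact div_self hMpos.ne'
    refine ⟨⟨x, hxmem⟩, ?_⟩
    have hSx : S ⟨x, hxmem⟩ = (p i)⁻¹ := by
      show ∑ j, p j / p i = (p i)⁻¹
      rw [← Finset.sum_div, hpsum, one_div]
    ext i'
    show x i'.castSucc / S ⟨x, hxmem⟩ = u i'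
    rw [hSx]
    show (p i'.castSucc / p i) / (p i)⁻¹ = u i'
    have hsimp : p i'.castSucc / p i / (p i)⁻¹ = p i'.castSucc := by
      field_simp
    rw [hsimp, hp]; simp only [Fin.snoc_castSucc]
  have hgcont : Continuous g := by
    have hScont : Continuous S :=
      continuous_finset_sum _ fun j _ =>
        (EuclideanSpace.proj j).continuous.comp continuous_subtype_val
    have hpi : Continuous fun x : ↥(cubeTop (n + 1)) =>
        ((fun i => (x : E) i.castSucc / S x) : Fin n → ℝ) := by
      apply continuous_pi
      intro i
      exact ((EuclideanSpace.proj i.castSucc).continuous.comp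
        continuous_subtype_val).div hScont hS0
    exact (PiLp.continuous_toLp 2 _).comp hpi
  have hgbot : ∀ x : ↥(cubeTop (n + 1)),
      (x : E) ∈ cubeBot (n + 1) ↔ g x ∈ frontier (simT n) := by
    intro x
    rw [simT_mem_frontier (hgmem x)]
    have hSx := hS x
    constructor
    · rintro ⟨-, j, hj⟩
      rcases Fin.eq_castSucc_or_eq_last j with ⟨i, rfl⟩ | rfl
      · exact Or.inl ⟨i, by rw [hg_apply, hj, zero_div]⟩
      · right
        rw [hgsum x, hj, zero_div, sub_zero]
    · rintro (⟨i, hi⟩ | hsum)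
      · refine ⟨x.2.1, ⟨i.castSucc, ?_⟩⟩
        rw [hg_apply] at hi
        exact (div_eq_zero_iff.mp hi).resolve_right (hS0 x)
      · refine ⟨x.2.1, ⟨Fin.last n, ?_⟩⟩
        rw [hgsum x] at hsum
        have hz : (x : E) (Fin.last n) / S x = 0 := by linarith
        exact (div_eq_zero_iff.mp hz).resolve_right (hS0 x)
  haveI : CompactSpace ↥(cubeTop (n + 1)) :=
    isCompact_iff_compactSpace.mp (cubeTop_isCompact _)
  let φ : ↥(cubeTop (n + 1)) → ↥(Metric.closedBall (0 : EuclideanSpace ℝ (Fin n)) 1) :=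
    fun x => ⟨h (g x), by rw [← hcl]; exact Set.mem_image_of_mem h (hgmem x)⟩
  have hφbij : Function.Bijective φ := by
    constructor
    · intro x y hxy
      exact hginj (h.injective (congrArg Subtype.val hxy))
    · rintro ⟨y, hy⟩
      rw [← hcl] at hy
      obtain ⟨u, hu, rfl⟩ := hy
      obtain ⟨x, rfl⟩ := hgsurj u hu
      exact ⟨x, rfl⟩
  have hφcont : Continuous φ := Continuous.subtype_mk (h.continuous.comp hgcont) _
  have hecont : Continuous (Equiv.ofBijective φ hφbij) := hφcont
  refine ⟨hecont.homeoOfEquivCompactToT2, ?_⟩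
  intro x
  rw [hgbot x]
  have hval : ((hecont.homeoOfEquivCompactToT2) x : EuclideanSpace ℝ (Fin n)) = h (g x) := rfl
  rw [hval, ← hfr]
  exact (Function.Injective.mem_set_image h.injective).symm

/-- For `k ≥ 1`, there is a homeomorphism from `∂₊C` (with the subspace topology) onto
the closed unit ball of Euclidean `(k-1)`-space carrying `∂₊C ∩ ∂₋C` onto the unit
sphere `S^{k-2}`.  In particular, collapsing `∂₊C ∩ ∂₋C` inside `∂₊C` yields a
`(k-1)`-sphere. -/
theorem cubeTop_homeo_closedBall (k : ℕ) (hk : 1 ≤ k) :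
    ∃ f : ↥(cubeTop k) ≃ₜ ↥(Metric.closedBall (0 : EuclideanSpace ℝ (Fin (k - 1))) 1),
      ∀ x : ↥(cubeTop k),
        (x : EuclideanSpace ℝ (Fin k)) ∈ cubeBot k ↔
          (f x : EuclideanSpace ℝ (Fin (k - 1))) ∈
            Metric.sphere (0 : EuclideanSpace ℝ (Fin (k - 1))) 1 := by
  obtain ⟨n, rfl⟩ : ∃ n, k = n + 1 := ⟨k - 1, (Nat.succ_pred_eq_of_pos hk).symm⟩
  exact cubeTop_homeo_closedBall_aux n
end
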